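/- Let R be a commutative ring that is a principal ideal domain, and let p : R → S be an injective homomorphism of commutative rings satisfying the ideal extension property (for every ideal I of R there is an ideal J of S with p⁻¹(J) = I). Then p is pure as a morphism of R-modules: for every R-module M, the map M → M ⊗_R S, m ↦ m ⊗ 1, is injective. -/

import Mathlib

set_option maxHeartbeats 1000000
set_option synthInstance.maxHeartbeats 400000


open TensorProduct

section Aux

variable {R : Type*} {S : Type*} [CommRing R] [CommRing S] [Algebra R S]

/-- Cyclic case: `R ⧸ I → (R ⧸ I) ⊗ S` is injective, given the ideal extension property. -/
lemma aux_cyclic (hext : ∀ I : Ideal R, ∃ J : Ideal S, Ideal.comap (algebraMap R S) J = I)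
    (I : Ideal R) (x : R ⧸ I) (h : x ⊗ₜ[R] (1 : S) = 0) : x = 0 := by
  obtain ⟨r, rfl⟩ := Ideal.Quotient.mk_surjective x
  obtain ⟨J, hJ⟩ := hext I
  have h1 : (TensorProduct.quotTensorEquivQuotSMul S I) ((Ideal.Quotient.mk I) r ⊗ₜ[R] (1 : S))
      = 0 := by rw [h]; simp
  rw [TensorProduct.quotTensorEquivQuotSMul_mk_tmul] at h1
  have h2 : r • (1 : S) ∈ (I • (⊤ : Submodule R S)) := (Submodule.Quotient.mk_eq_zero _).mp h1
  have h3 : (I • (⊤ : Submodule R S)) ≤ J.restrictScalars R := by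
    refine Submodule.smul_le.mpr fun a ha s _ => ?_
    rw [Submodule.restrictScalars_mem, Algebra.smul_def]
    exact Ideal.mul_mem_right _ _ (show algebraMap R S a ∈ J from by rw [← hJ] at ha; exact ha)
  have h4 : algebraMap R S r ∈ J := by
    have := h3 h2
    rwa [Submodule.restrictScalars_mem, Algebra.smul_def, mul_one] at this
  rw [Ideal.Quotient.eq_zero_iff_mem, ← hJ]
  exact h4

/-- Free rank-one case: `R → R ⊗ S` is injective. -/
lemma aux_R (hinj : Function.Injective (algebraMap R S))
    (r : R) (h : r ⊗ₜ[R] (1 : S) = 0) : r = 0 := by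
  have h1 := congrArg (TensorProduct.lid R S) h
  rw [map_zero, TensorProduct.lid_tmul] at h1
  rw [← Algebra.algebraMap_eq_smul_one] at h1
  exact hinj (h1.trans (map_zero (algebraMap R S)).symm)

end Aux

universe u v w

/-- Finitely generated case, via the structure theorem for f.g. modules over a PID. -/
lemma aux_fg {R : Type u} {S : Type v} [CommRing R] [IsDomain R] [IsPrincipalIdealRing R]
    [CommRing S] [Algebra R S]
    (hinj : Function.Injective (algebraMap R S))
    (hext : ∀ I : Ideal R, ∃ J : Ideal S, Ideal.comap (algebraMap R S) J = I)
    (M : Type w) [AddCommGroup M] [Module R M] [Module.Finite R M]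
    (m : M) (h : m ⊗ₜ[R] (1 : S) = 0) : m = 0 := by
  haveI : Module.Finite R (ULift.{u} M) :=
    Module.Finite.equiv (ULift.moduleEquiv (R := R) (M := M)).symm
  obtain ⟨n, ι, fι, p, hp, e, ⟨eqv⟩⟩ :=
    Module.equiv_free_prod_directSum (R := R) (M := ULift.{u} M)
  set Φ : M →ₗ[R] ((Fin n →₀ R) × DirectSum ι (fun i => R ⧸ (R ∙ p i ^ e i))) :=
    eqv.toLinearMap ∘ₗ (ULift.moduleEquiv (R := R) (M := M)).symm.toLinearMap with hΦ
  have hm : Φ m ⊗ₜ[R] (1 : S) = 0 := by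
    have := congrArg (LinearMap.rTensor S Φ) h
    rwa [map_zero, LinearMap.rTensor_tmul] at this
  have h1 : (Φ m).1 = 0 := by
    ext i
    have t := congrArg (LinearMap.rTensor S ((Finsupp.lapply i : (Fin n →₀ R) →ₗ[R] R) ∘ₗ
      (LinearMap.fst R (Fin n →₀ R) (DirectSum ι (fun i => R ⧸ (R ∙ p i ^ e i)))))) hm
    rw [map_zero, LinearMap.rTensor_tmul] at t
    simpa using aux_R hinj _ t
  have h2 : (Φ m).2 = 0 := by
    refine DFinsupp.ext fun i => ?_
    have t := congrArg (LinearMap.rTensor S ((DirectSum.component R ι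
      (fun i => R ⧸ (R ∙ p i ^ e i)) i) ∘ₗ
      (LinearMap.snd R (Fin n →₀ R) (DirectSum ι (fun i => R ⧸ (R ∙ p i ^ e i)))))) hm
    rw [map_zero, LinearMap.rTensor_tmul] at t
    exact aux_cyclic hext (R ∙ p i ^ e i) _ t
  have hm0 : Φ m = 0 := by
    rw [show Φ m = ((Φ m).1, (Φ m).2) from rfl, h1, h2]
    rfl
  have hm0' : eqv ((ULift.moduleEquiv (R := R) (M := M)).symm m) = 0 := hm0
  exact (LinearEquiv.map_eq_zero_iff _).mp ((LinearEquiv.map_eq_zero_iff _).mp hm0')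

theorem stmt13 {R S : Type*} [CommRing R] [IsDomain R] [IsPrincipalIdealRing R]
    [CommRing S] [Algebra R S]
    (hinj : Function.Injective (algebraMap R S))
    (hext : ∀ I : Ideal R, ∃ J : Ideal S, Ideal.comap (algebraMap R S) J = I) :
    ∀ (M : Type*) [AddCommGroup M] [Module R M],
      Function.Injective (fun m : M => m ⊗ₜ[R] (1 : S)) := by
  intro M _ _
  suffices h0 : ∀ m : M, m ⊗ₜ[R] (1 : S) = 0 → m = 0 by
    intro a b hab
    simp only at hab
    have : (a - b) ⊗ₜ[R] (1 : S) = 0 := by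
      rw [TensorProduct.sub_tmul, hab, sub_self]
    have := h0 _ this
    exact sub_eq_zero.mp this
  intro m h
  classical
  set ι' := {N : Submodule R M // N.FG} with hι'
  set f : ∀ i j : ι', i ≤ j → (↥i.1 →ₗ[R] ↥j.1) :=
    fun i j hij => Submodule.inclusion hij with hf
  haveI : Nonempty ι' := ⟨⟨⊥, Submodule.fg_bot⟩⟩
  haveI : IsDirected ι' (· ≤ ·) :=
    ⟨fun a b => ⟨⟨a.1 ⊔ b.1, a.2.sup b.2⟩, Subtype.coe_le_coe.mp le_sup_left, Subtype.coe_le_coe.mp le_sup_right⟩⟩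
  haveI : DirectedSystem (fun N : ι' => ↥N.1) (fun i j h => f i j h) := by
    constructor
    · intro i x; rfl
    · intro i j k hij hjk x; rfl
  haveI : DirectedSystem (fun N : ι' => (↥N.1) ⊗[R] S)
      (fun i j h => LinearMap.rTensor S (f i j h)) := by
    constructor
    · intro i x
      rw [show f i i le_rfl = LinearMap.id from by ext y; rfl, LinearMap.rTensor_id]
      rfl
    · intro k j i hij hjk x
      rw [← LinearMap.rTensor_comp_apply,
        show (f j k hjk ∘ₗ f i j hij) = f i k (hij.trans hjk) from by ext y; rfl]
  set L : Module.DirectLimit (fun N : ι' => ↥N.1) f →ₗ[R] M :=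
    Module.DirectLimit.lift R ι' (fun N : ι' => ↥N.1) f
      (fun N => N.1.subtype) (fun i j hij x => by rw [hf]; rfl) with hL
  have hLinj : Function.Injective L := by
    rw [injective_iff_map_eq_zero]
    intro z hz
    obtain ⟨i, x, rfl⟩ := Module.DirectLimit.exists_of z
    rw [hL, Module.DirectLimit.lift_of] at hz
    rw [show x = 0 from Subtype.ext hz, map_zero]
  have hLsurj : Function.Surjective L := by
    intro x
    refine ⟨Module.DirectLimit.of R ι' (fun N : ι' => ↥N.1) f
      ⟨R ∙ x, Submodule.fg_span_singleton x⟩ ⟨x, Submodule.mem_span_singleton_self x⟩, ?_⟩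
    rw [hL, Module.DirectLimit.lift_of]
    rfl
  set eL : Module.DirectLimit (fun N : ι' => ↥N.1) f ≃ₗ[R] M :=
    LinearEquiv.ofBijective L (show Function.Bijective L from ⟨hLinj, hLsurj⟩) with heL
  set i₀ : ι' := ⟨R ∙ m, Submodule.fg_span_singleton m⟩ with hi₀
  set g₀ : ↥i₀.1 := ⟨m, Submodule.mem_span_singleton_self m⟩ with hg₀
  have key : Module.DirectLimit.of R ι' (fun N : ι' => ↥N.1) f i₀ g₀ ⊗ₜ[R] (1 : S) = 0 := by
    apply (TensorProduct.congr eL (LinearEquiv.refl R S)).injective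
    rw [map_zero, TensorProduct.congr_tmul, LinearEquiv.refl_apply, heL,
      LinearEquiv.ofBijective_apply, hL, Module.DirectLimit.lift_of]
    exact h
  have key2 : Module.DirectLimit.of R ι' (fun N : ι' => (↥N.1) ⊗[R] S)
      (fun i j h => LinearMap.rTensor S (f i j h)) i₀ (g₀ ⊗ₜ[R] (1 : S)) = 0 := by
    have := congrArg (TensorProduct.directLimitLeft f S) key
    rwa [map_zero, TensorProduct.directLimitLeft_tmul_of] at this
  obtain ⟨j, hij, hj⟩ := Module.DirectLimit.of.zero_exact key2
  rw [LinearMap.rTensor_tmul] at hj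
  haveI : Module.Finite R ↥j.1 := Module.Finite.iff_fg.mpr j.2
  have hz := aux_fg hinj hext (↥j.1) _ hj
  have hz2 := congrArg (Subtype.val) hz
  simp only [Submodule.coe_inclusion, ZeroMemClass.coe_zero] at hz2
  exact hz2
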